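/- Let X be a nonempty string of length n over Σ and let # ∈ Σ be a letter that does not occur in X and is strictly greater than every letter occurring in X. Set Y = XX# (the concatenation of two copies of X followed by #), a string of length 2n+1. If Y[i..2n+1] is the lexicographically minimal suffix of Y, then i ∈ [1,n] and i is the leftmost position at which a lexicographically minimal rotation of X starts. -/

import Mathlib

open scoped Classical

variable {α : Type*} [LinearOrder α]

/-- The rotation of `W` starting at the 1-based position `j`. -/
def rot (W : List α) (j : ℕ) : List α := W.drop (j - 1) ++ W.take (j - 1)

/-- The fragment `T[i..i+ℓ-1]` (1-based position `i`, length `ℓ`). -/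
def frag (T : List α) (i ℓ : ℕ) : List α := (T.drop (i - 1)).take ℓ

/-- The `m`-fold concatenation `U^m`. -/
def listPow (U : List α) (m : ℕ) : List α := (List.replicate m U).flatten

/-- A nonempty string is primitive if it is not a power `U^m` with `m ≥ 2`. -/
def Primitive (X : List α) : Prop :=
  X ≠ [] ∧ ∀ (U : List α) (m : ℕ), 2 ≤ m → X ≠ listPow U m

/-- `j ∈ [1,|X|]` is a position at which a lexicographically minimal rotation of `X` starts. -/
def IsMinRotPos (X : List α) (j : ℕ) : Prop :=
  j ∈ Finset.Icc 1 X.length ∧ ∀ k ∈ Finset.Icc 1 X.length, rot X j ≤ rot X k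

/-- `j` is the bd-anchor of `X`: the smallest position of a lexicographically minimal rotation. -/
def IsBdAnchor (X : List α) (j : ℕ) : Prop :=
  IsMinRotPos X j ∧ ∀ k, IsMinRotPos X k → j ≤ k

/-- The set `A_ℓ(T)` of order-`ℓ` bd-anchors of `T` (1-based absolute positions). -/
def bdAnchors (ℓ : ℕ) (T : List α) : Set ℕ :=
  { p | ∃ i ∈ Finset.Icc 1 (T.length - ℓ + 1), ∃ j, IsBdAnchor (frag T i ℓ) j ∧ p = i - 1 + j }

/-! ### Auxiliary lemmas on the lexicographic order -/

lemma consLtIff {a b : α} {s t : List α} : a :: s < b :: t ↔ a < b ∨ (a = b ∧ s < t) := by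
  constructor
  · intro h
    cases h with
    | cons h => exact Or.inr ⟨rfl, h⟩
    | rel h => exact Or.inl h
  · rintro (h | ⟨rfl, h⟩)
    · exact List.Lex.rel h
    · exact List.Lex.cons h

lemma appendLtIff : ∀ (s t : List α), s.length = t.length → ∀ (u v : List α),
    (s ++ u < t ++ v ↔ s < t ∨ (s = t ∧ u < v))
  | [], [], _, u, v => by simp [lt_irrefl]
  | a :: s, b :: t, h, u, v => by
    simp only [List.length_cons, Nat.add_right_cancel_iff] at h
    simp only [List.cons_append, consLtIff, appendLtIff s t h u v, List.cons.injEq]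
    tauto
  | [], _ :: _, h, _, _ => by simp at h
  | _ :: _, [], h, _, _ => by simp at h

lemma appendLtAppend {s t : List α} (h : s.length = t.length) (hlt : s < t) (u v : List α) :
    s ++ u < t ++ v := (appendLtIff s t h u v).2 (Or.inl hlt)

lemma appendLeftLtIff (l : List α) {u v : List α} : l ++ u < l ++ v ↔ u < v := by
  simpa [lt_irrefl] using appendLtIff l l rfl u v

lemma headLtSingleton {X : List α} (hX : X ≠ []) {h : α} (hm : ∀ a ∈ X, a < h) (w : List α) :
    X ++ w < [h] := by
  obtain ⟨a, X', rfl⟩ := List.exists_cons_of_ne_nil hX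
  exact List.Lex.rel (hm a (List.mem_cons_self))

lemma rotLen (X : List α) (j : ℕ) : (rot X j).length = X.length := by
  simp [rot]; omega

lemma dropY1 {X : List α} (h : α) {k : ℕ} (hk : k ≤ X.length) :
    (X ++ X ++ [h]).drop k = X.drop k ++ (X ++ [h]) := by
  rw [List.append_assoc, List.drop_append]
  have : k - X.length = 0 := by omega
  rw [this, List.drop_zero]

lemma dropY2 {X : List α} (h : α) {k : ℕ} (hk : X.length ≤ k) (hk2 : k ≤ 2 * X.length) :
    (X ++ X ++ [h]).drop k = X.drop (k - X.length) ++ [h] := by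
  rw [List.append_assoc, List.drop_append,
    List.drop_eq_nil_of_le hk, List.drop_append]
  have : k - X.length - X.length = 0 := by omega
  rw [this, List.drop_zero, List.nil_append]

lemma tailLt {X : List α} {h : α} (hm : ∀ a ∈ X, a < h) {k i : ℕ} (hk1 : 1 ≤ k)
    (hki : k < i) (hi : i ≤ X.length) (hrot : rot X k = rot X i) :
    X.drop (k - 1) ++ [h] < X.drop (i - 1) ++ [h] := by
  obtain ⟨m, hm0⟩ : ∃ m, m = X.length - i + 1 := ⟨_, rfl⟩
  have hlk : (X.drop (k - 1)).length = X.length - (k - 1) := by simp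
  have hli : (X.drop (i - 1)).length = X.length - (i - 1) := by simp
  have h1 : (rot X k).take m = (X.drop (k - 1)).take m := by
    rw [rot]
    exact List.take_append_of_le_length (by rw [hlk]; omega)
  have h2 : (rot X i).take m = X.drop (i - 1) := by
    rw [rot, List.take_append_of_le_length (by rw [hli]; omega),
      List.take_of_length_le (by rw [hli]; omega)]
  have key : X.drop (i - 1) = (X.drop (k - 1)).take m := by
    rw [← h2, ← hrot, h1]
  set r := (X.drop (k - 1)).drop m with hrdef
  have hrlen : r.length = i - k := by rw [hrdef, List.length_drop, hlk]; omega
  have hrne : r ≠ [] := List.length_pos_iff.mp (by rw [hrlen]; omega)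
  have hsplit : X.drop (k - 1) = X.drop (i - 1) ++ r := by
    rw [key, hrdef, List.take_append_drop]
  have hrlt : r ++ [h] < [h] :=
    headLtSingleton hrne
      (fun a ha => hm a (List.drop_subset _ _ (List.drop_subset _ _ (hrdef ▸ ha)))) [h]
  calc X.drop (k - 1) ++ [h] = X.drop (i - 1) ++ (r ++ [h]) := by
        rw [hsplit, List.append_assoc]
    _ < X.drop (i - 1) ++ [h] := (appendLeftLtIff _).2 hrlt

/-- Let `X` be a nonempty string of length `n`, `#` a letter not occurring in
`X` and strictly greater than every letter of `X`, and `Y = XX#`. If `Y[i..2n+1]` is the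
lexicographically minimal suffix of `Y` then `i ∈ [1,n]` and `i` is the leftmost position
of a lexicographically minimal rotation of `X`, i.e. the bd-anchor of `X`. -/
theorem min_suffix_gives_bd_anchor (X : List α) (hX : X ≠ []) (hash : α)
    (hnotin : hash ∉ X) (hmax : ∀ a ∈ X, a < hash)
    (Y : List α) (hY : Y = X ++ X ++ [hash])
    (i : ℕ) (hi : i ∈ Finset.Icc 1 (2 * X.length + 1))
    (hmin : ∀ k ∈ Finset.Icc 1 (2 * X.length + 1), Y.drop (i - 1) ≤ Y.drop (k - 1)) :
    i ∈ Finset.Icc 1 X.length ∧ IsBdAnchor X i := by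
  subst hY
  have hn1 : 1 ≤ X.length := List.length_pos_iff.mpr hX
  rw [Finset.mem_Icc] at hi
  have srot : ∀ k, 1 ≤ k → k ≤ X.length →
      (X ++ X ++ [hash]).drop (k - 1) = rot X k ++ (X.drop (k - 1) ++ [hash]) := by
    intro k hk1 hk2
    rw [dropY1 hash (by omega), rot, List.append_assoc]
    congr 1
    rw [← List.append_assoc, List.take_append_drop]
  have hin : i ≤ X.length := by
    by_contra hc
    push_neg at hc
    rcases Nat.lt_or_ge i (2 * X.length + 1) with h2n | h2n
    · have e_i : (X ++ X ++ [hash]).drop (i - 1) = X.drop (i - X.length - 1) ++ [hash] := by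
        rw [dropY2 hash (by omega) (by omega)]
        congr 2
        omega
      have e_k : (X ++ X ++ [hash]).drop (i - X.length - 1) =
          X.drop (i - X.length - 1) ++ (X ++ [hash]) := dropY1 hash (by omega)
      have hle := hmin (i - X.length) (Finset.mem_Icc.mpr ⟨by omega, by omega⟩)
      rw [e_i, show i - X.length - 1 = i - X.length - 1 from rfl, e_k] at hle
      have hlt : X.drop (i - X.length - 1) ++ (X ++ [hash]) <
          X.drop (i - X.length - 1) ++ [hash] :=
        (appendLeftLtIff _).2 (headLtSingleton hX hmax [hash])
      exact absurd hle (not_le.mpr hlt)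
    · have hieq : i = 2 * X.length + 1 := by omega
      have e_i : (X ++ X ++ [hash]).drop (i - 1) = [hash] := by
        rw [hieq, show 2 * X.length + 1 - 1 = 2 * X.length from rfl,
          dropY2 hash (by omega) (by omega),
          show 2 * X.length - X.length = X.length from by omega,
          List.drop_length, List.nil_append]
      have hle := hmin 1 (Finset.mem_Icc.mpr ⟨le_refl 1, by omega⟩)
      rw [e_i, show (1 : ℕ) - 1 = 0 from rfl, List.drop_zero, List.append_assoc] at hle
      exact absurd hle (not_le.mpr (headLtSingleton hX hmax (X ++ [hash])))
  have hiIcc : i ∈ Finset.Icc 1 X.length := Finset.mem_Icc.mpr ⟨hi.1, hin⟩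
  have minpos : IsMinRotPos X i := by
    refine ⟨hiIcc, fun k hk => ?_⟩
    rw [Finset.mem_Icc] at hk
    by_contra hc
    push_neg at hc
    have hle := hmin k (Finset.mem_Icc.mpr ⟨hk.1, by omega⟩)
    rw [srot i hi.1 hin, srot k hk.1 hk.2] at hle
    have hlt : rot X k ++ (X.drop (k - 1) ++ [hash]) <
        rot X i ++ (X.drop (i - 1) ++ [hash]) :=
      appendLtAppend (by rw [rotLen, rotLen]) hc _ _
    exact absurd hle (not_le.mpr hlt)
  refine ⟨hiIcc, minpos, fun k hk => ?_⟩
  by_contra hc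
  push_neg at hc
  have hkIcc := hk.1
  rw [Finset.mem_Icc] at hkIcc
  have heq : rot X k = rot X i := le_antisymm (hk.2 i hiIcc) (minpos.2 k hk.1)
  have htlt : X.drop (k - 1) ++ [hash] < X.drop (i - 1) ++ [hash] :=
    tailLt hmax hkIcc.1 hc hin heq
  have hle := hmin k (Finset.mem_Icc.mpr ⟨hkIcc.1, by omega⟩)
  rw [srot i hi.1 hin, srot k hkIcc.1 hkIcc.2] at hle
  have hlt : rot X k ++ (X.drop (k - 1) ++ [hash]) <
      rot X i ++ (X.drop (i - 1) ++ [hash]) :=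
    (appendLtIff _ _ (by rw [rotLen, rotLen]) _ _).2 (Or.inr ⟨heq, htlt⟩)
  exact absurd hle (not_le.mpr hlt)
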